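/- Let μ be a stable matching and μ' a 1-envy-free matching in the same finite many-to-one matching market with strict preferences. Then exactly one of the following holds: (Case 1) |μ⁻¹(j)| = |μ'⁻¹(j)| for every college j; (Case 2) there is exactly one college j* with |μ⁻¹(j*)| = |μ'⁻¹(j*)| + 1, and |μ⁻¹(j)| = |μ'⁻¹(j)| for all j ≠ j*. -/

import Mathlib

attribute [local instance] Classical.propDecidable

noncomputable section

/-- A many-to-one college admissions market (college admissions model) with `n`
students and `m` colleges.  Strict preferences are encoded by injective rank
functions (a smaller rank means more preferred); `none` is the outside option
`0` (being unmatched / an unfilled position). -/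
structure Market (n m : ℕ) where
  quota : Fin m → ℕ
  sRank : Fin n → Option (Fin m) → ℕ
  sRank_inj : ∀ i, Function.Injective (sRank i)
  cRank : Fin m → Option (Fin n) → ℕ
  cRank_inj : ∀ j, Function.Injective (cRank j)

namespace Market

variable {n m : ℕ}

/-- Student `i` strictly prefers `a` to `b`. -/
def sPref (M : Market n m) (i : Fin n) (a b : Option (Fin m)) : Prop :=
  M.sRank i a < M.sRank i b

/-- College `j` strictly prefers `a` to `b`. -/
def cPref (M : Market n m) (j : Fin m) (a b : Option (Fin n)) : Prop :=
  M.cRank j a < M.cRank j b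

/-- The set `μ⁻¹(j)` of students matched to college `j` under `μ`. -/
def assigned (M : Market n m) (μ : Fin n → Option (Fin m)) (j : Fin m) : Finset (Fin n) :=
  Finset.univ.filter fun i => μ i = some j

/-- `μ` is a (capacity-feasible) matching: `|μ⁻¹(j)| ≤ q_j` for every college. -/
def IsMatching (M : Market n m) (μ : Fin n → Option (Fin m)) : Prop :=
  ∀ j, (M.assigned μ j).card ≤ M.quota j

/-- Individual rationality of `μ`. -/
def IndRational (M : Market n m) (μ : Fin n → Option (Fin m)) : Prop :=
  (∀ i, ¬ M.sPref i none (μ i)) ∧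
  (∀ j i', μ i' = some j → ¬ M.cPref j none (some i'))

/-- `(i, j)` is a blocking pair for `μ`. -/
def Blocks (M : Market n m) (μ : Fin n → Option (Fin m)) (i : Fin n) (j : Fin m) : Prop :=
  M.sPref i (some j) (μ i) ∧
  (((M.assigned μ j).card < M.quota j ∧ M.cPref j (some i) none) ∨
   ((M.assigned μ j).card = M.quota j ∧ ∃ i' ∈ M.assigned μ j, M.cPref j (some i) (some i')))

/-- `μ` is stable: individually rational with no blocking pair. -/
def Stable (M : Market n m) (μ : Fin n → Option (Fin m)) : Prop :=
  M.IndRational μ ∧ ∀ i j, ¬ M.Blocks μ i j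

/-- `μ` is envy-free: individually rational and any blocking pair involves an
unmatched student. -/
def EnvyFree (M : Market n m) (μ : Fin n → Option (Fin m)) : Prop :=
  M.IndRational μ ∧ ∀ i j, M.Blocks μ i j → μ i = none

/-- `μ` is 1-envy-free: envy-free, and either stable or there is one and only
one student who belongs to every blocking pair. -/
def OneEnvyFree (M : Market n m) (μ : Fin n → Option (Fin m)) : Prop :=
  M.EnvyFree μ ∧ (M.Stable μ ∨ ∃! i : Fin n, ∀ i' j, M.Blocks μ i' j → i' = i)

/-- `(i, j)` is a student-maximal blocking pair: `j` is `i`'s most preferred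
college among those with whom `i` forms a blocking pair. -/
def StudentMaxBlock (M : Market n m) (μ : Fin n → Option (Fin m)) (i : Fin n) (j : Fin m) :
    Prop :=
  M.Blocks μ i j ∧ ∀ j', M.Blocks μ i j' → M.sRank i (some j) ≤ M.sRank i (some j')

/-- `T` is the re-stabilization operator: on a 1-envy-free matching with no
blocking pair it is the identity; otherwise it satisfies the unique
student-maximal blocking pair `(i, j)`, matching `i` to `j`, keeping everyone
not matched to `j` unchanged, keeping the students of `j` if `j` has a vacancy
or if they are not `j`'s worst current student, and unmatching `j`'s worst
current student otherwise. -/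
def IsTStep (M : Market n m) (T : (Fin n → Option (Fin m)) → Fin n → Option (Fin m)) : Prop :=
  ∀ μ, M.IsMatching μ → M.OneEnvyFree μ →
    ((∀ i j, ¬ M.Blocks μ i j) → T μ = μ) ∧
    ∀ i j, M.StudentMaxBlock μ i j →
      T μ i = some j ∧
      ∀ i', i' ≠ i →
        (μ i' ≠ some j → T μ i' = μ i') ∧
        (μ i' = some j →
          ((M.assigned μ j).card < M.quota j → T μ i' = μ i') ∧
          ((M.assigned μ j).card = M.quota j →
            ((∃ i'' ∈ M.assigned μ j, M.cPref j (some i') (some i'')) → T μ i' = μ i') ∧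
            ((∀ i'' ∈ M.assigned μ j, i'' ≠ i' → M.cPref j (some i'') (some i')) →
              T μ i' = none)))

/-- `Tstar` iterates `T` finitely many times from any 1-envy-free matching
until a fixed point of `T` is reached. -/
def IsTStarOf (M : Market n m) (T Tstar : (Fin n → Option (Fin m)) → Fin n → Option (Fin m)) :
    Prop :=
  ∀ μ, M.IsMatching μ → M.OneEnvyFree μ →
    ∃ r : ℕ, Tstar μ = T^[r] μ ∧ T (Tstar μ) = Tstar μ

/-- A one-step responsive improvement for college `j`: `A` is obtained from `B`
either by filling a vacancy with an acceptable student, or by swapping a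
student of `B` for a strictly preferred outside student. -/
def SwapImproves (M : Market n m) (j : Fin m) (A B : Finset (Fin n)) : Prop :=
  (∃ i₁, i₁ ∉ B ∧ A = insert i₁ B ∧ M.cPref j (some i₁) none) ∨
  (∃ i₁ i₂, i₂ ∈ B ∧ i₁ ∉ B ∧ A = insert i₁ (B.erase i₂) ∧ M.cPref j (some i₁) (some i₂))

/-- The responsive extension of college `j`'s strict preference to sets of
students: the transitive closure of one-step responsive improvements. -/
def SetPref (M : Market n m) (j : Fin m) (A B : Finset (Fin n)) : Prop :=
  Relation.TransGen (M.SwapImproves j) A B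

/-- `μ₁ ≿ μ₂`: every college either gets the same set of students or a
strictly (responsively) preferred set. -/
def CollegesWeakPref (M : Market n m) (μ₁ μ₂ : Fin n → Option (Fin m)) : Prop :=
  ∀ j, M.assigned μ₁ j = M.assigned μ₂ j ∨ M.SetPref j (M.assigned μ₁ j) (M.assigned μ₂ j)

/-- `μ` is the student-optimal stable matching: a stable matching that every
student weakly prefers to any other stable matching. -/
def IsSOSM (M : Market n m) (μ : Fin n → Option (Fin m)) : Prop :=
  M.IsMatching μ ∧ M.Stable μ ∧
    ∀ μ', M.IsMatching μ' → M.Stable μ' → ∀ i, M.sRank i (μ i) ≤ M.sRank i (μ' i)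

/-- `μ` (with student `i` unmatched) is a stable matching of the market in
which student `i` has been removed. -/
def StableAway (M : Market n m) (i : Fin n) (μ : Fin n → Option (Fin m)) : Prop :=
  μ i = none ∧
  (∀ i', i' ≠ i → ¬ M.sPref i' none (μ i')) ∧
  (∀ j i', i' ≠ i → μ i' = some j → ¬ M.cPref j none (some i')) ∧
  (∀ i' j, i' ≠ i → ¬ M.Blocks μ i' j)

/-- `μ` (with student `i` unmatched) is the student-optimal stable matching of
the market in which student `i` has been removed. -/
def IsSOSMAway (M : Market n m) (i : Fin n) (μ : Fin n → Option (Fin m)) : Prop :=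
  M.IsMatching μ ∧ M.StableAway i μ ∧
    ∀ μ', M.IsMatching μ' → M.StableAway i μ' →
      ∀ i', i' ≠ i → M.sRank i' (μ i') ≤ M.sRank i' (μ' i')

/-- The maximum rank difference `h(w)` among the colleges' preferences: the
largest rank gap `|w_j(i₁) − w_j(i₂)|` over colleges `j` and pairs `(i₁, i₂)`
on whose relative ranking at least two colleges disagree (`0` if there is no
disagreement). -/
def maxRankDiff (M : Market n m) : ℕ :=
  Finset.univ.sup fun j : Fin m =>
    (Finset.univ.filter fun q : Option (Fin n) × Option (Fin n) =>
        ∃ j₁ j₂ : Fin m, M.cPref j₁ q.1 q.2 ∧ M.cPref j₂ q.2 q.1).sup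
      fun q => ((M.cRank j q.1 : ℤ) - (M.cRank j q.2 : ℤ)).natAbs

/-- `N*_{j,1}(μ) = μ⁻¹(j) \ μ*⁻¹(j)` : students of `j` under `μ` but not `μs`. -/
def Nset1 (M : Market n m) (μ μs : Fin n → Option (Fin m)) (j : Fin m) : Finset (Fin n) :=
  M.assigned μ j \ M.assigned μs j

/-- `N*_{j,0}(μ) = μ*⁻¹(j) \ μ⁻¹(j)` : students of `j` under `μs` but not `μ`. -/
def Nset0 (M : Market n m) (μ μs : Fin n → Option (Fin m)) (j : Fin m) : Finset (Fin n) :=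
  M.assigned μs j \ M.assigned μ j

/-- The rank `r_{j,i}(A)` of student `i` within the set `A` according to `≻_j`. -/
def rankIn (M : Market n m) (j : Fin m) (i : Fin n) (A : Finset (Fin n)) : ℕ :=
  (A.filter fun i' => M.cPref j (some i') (some i)).card + 1

/-- `a ▷_j b`: student `a` displaces student `b` from college `j` (as we move
from the SOSM `μs` to the stable matching `μ`). -/
def Displaces (M : Market n m) (μ μs : Fin n → Option (Fin m)) (j : Fin m) (a b : Fin n) :
    Prop :=
  a ∈ M.Nset1 μ μs j ∧ b ∈ M.Nset0 μ μs j ∧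
    M.rankIn j a (M.Nset1 μ μs j) = M.rankIn j b (M.Nset0 μ μs j)

/-- `a ▷ b`: `a` displaces `b` from some college. -/
def DisplacesAny (M : Market n m) (μ μs : Fin n → Option (Fin m)) (a b : Fin n) : Prop :=
  ∃ j, M.Displaces μ μs j a b

/-- The positions of the related one-to-one market: college `j` is split into
`q_j` ordered positions. -/
abbrev Position (M : Market n m) : Type := (j : Fin m) × Fin (M.quota j)

/-- Student `i`'s strict preference over positions in the related one-to-one
market: positions of strictly better colleges are better, and within a college
a smaller index is better. -/
def PosBetter (M : Market n m) (i : Fin n) :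
    Option (Position M) → Option (Position M) → Prop
  | some q, some q' =>
      M.sRank i (some q.1) < M.sRank i (some q'.1) ∨ (q.1 = q'.1 ∧ (q.2 : ℕ) < (q'.2 : ℕ))
  | some q, none => M.sRank i (some q.1) < M.sRank i none
  | none, some q' => M.sRank i none < M.sRank i (some q'.1)
  | none, none => False

/-- `(μN, μM)` is the one-to-one matching of the related market corresponding
to the many-to-one matching `μ`: the students of `μ⁻¹(j)` occupy, in the order
of college `j`'s preference, the ordered positions of `j`. -/
def Corresponds (M : Market n m) (μ : Fin n → Option (Fin m))
    (μN : Fin n → Option (Position M)) (μM : Position M → Option (Fin n)) : Prop :=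
  (∀ i p, μN i = some p ↔ μM p = some i) ∧
  (∀ i j, (∃ s, μN i = some ⟨j, s⟩) ↔ μ i = some j) ∧
  (∀ i j (s : Fin (M.quota j)), μN i = some ⟨j, s⟩ →
    (s : ℕ) = ((M.assigned μ j).filter fun i' => M.cPref j (some i') (some i)).card)

/-- `(i, p)` is a blocking pair in the related one-to-one market. -/
def PosBlocks (M : Market n m) (μN : Fin n → Option (Position M))
    (μM : Position M → Option (Fin n)) (i : Fin n) (p : Position M) : Prop :=
  M.PosBetter i (some p) (μN i) ∧ M.cPref p.1 (some i) (μM p)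

/-- Individual rationality in the related one-to-one market. -/
def PosIR (M : Market n m) (μN : Fin n → Option (Position M))
    (μM : Position M → Option (Fin n)) : Prop :=
  (∀ i, ¬ M.PosBetter i none (μN i)) ∧ (∀ p : Position M, ¬ M.cPref p.1 none (μM p))

/-- Stability in the related one-to-one market. -/
def PosStable (M : Market n m) (μN : Fin n → Option (Position M))
    (μM : Position M → Option (Fin n)) : Prop :=
  M.PosIR μN μM ∧ ∀ i p, ¬ M.PosBlocks μN μM i p

/-- Simplicity in the related one-to-one market: individually rational and any
blocking pair involves an unmatched student. -/
def PosSimple (M : Market n m) (μN : Fin n → Option (Position M))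
    (μM : Position M → Option (Fin n)) : Prop :=
  M.PosIR μN μM ∧ ∀ i p, M.PosBlocks μN μM i p → μN i = none

/-- 1-simplicity in the related one-to-one market: simple, and either stable or
there is one and only one student belonging to every blocking pair. -/
def PosOneSimple (M : Market n m) (μN : Fin n → Option (Position M))
    (μM : Position M → Option (Fin n)) : Prop :=
  M.PosSimple μN μM ∧
    (M.PosStable μN μM ∨ ∃! i : Fin n, ∀ i' p, M.PosBlocks μN μM i' p → i' = i)

end Market

/-- A generic one-to-one matching market with `n` students and `p` positions,
with strict preferences encoded by injective rank functions. -/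
structure OOMarket (n p : ℕ) where
  sRank : Fin n → Option (Fin p) → ℕ
  sRank_inj : ∀ i, Function.Injective (sRank i)
  pRank : Fin p → Option (Fin n) → ℕ
  pRank_inj : ∀ c, Function.Injective (pRank c)

namespace OOMarket

variable {n p : ℕ}

/-- `(μN, μM)` is a one-to-one matching. -/
def IsOOMatching (O : OOMarket n p) (μN : Fin n → Option (Fin p))
    (μM : Fin p → Option (Fin n)) : Prop :=
  ∀ i c, μN i = some c ↔ μM c = some i

/-- `(i, c)` is a blocking pair for `(μN, μM)`. -/
def OOBlocks (O : OOMarket n p) (μN : Fin n → Option (Fin p))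
    (μM : Fin p → Option (Fin n)) (i : Fin n) (c : Fin p) : Prop :=
  O.sRank i (some c) < O.sRank i (μN i) ∧ O.pRank c (some i) < O.pRank c (μM c)

/-- Individual rationality. -/
def OOIR (O : OOMarket n p) (μN : Fin n → Option (Fin p))
    (μM : Fin p → Option (Fin n)) : Prop :=
  (∀ i, ¬ O.sRank i none < O.sRank i (μN i)) ∧ (∀ c, ¬ O.pRank c none < O.pRank c (μM c))

/-- Stability. -/
def OOStable (O : OOMarket n p) (μN : Fin n → Option (Fin p))
    (μM : Fin p → Option (Fin n)) : Prop :=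
  O.OOIR μN μM ∧ ∀ i c, ¬ O.OOBlocks μN μM i c

/-- Simplicity: individually rational and every blocking pair involves an
unmatched student. -/
def OOSimple (O : OOMarket n p) (μN : Fin n → Option (Fin p))
    (μM : Fin p → Option (Fin n)) : Prop :=
  O.OOIR μN μM ∧ ∀ i c, O.OOBlocks μN μM i c → μN i = none

/-- 1-simplicity: simple, and either stable or there is one and only one
student belonging to every blocking pair. -/
def OOOneSimple (O : OOMarket n p) (μN : Fin n → Option (Fin p))
    (μM : Fin p → Option (Fin n)) : Prop :=
  O.OOSimple μN μM ∧
    (O.OOStable μN μM ∨ ∃! i : Fin n, ∀ i' c, O.OOBlocks μN μM i' c → i' = i)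

end OOMarket

end


/-! ## Auxiliary development -/

noncomputable section AuxDev

section Iter

variable {α : Type*} [Fintype α]

/-- One step of iterating a partial function. -/
def gstep (F : α → Option α) : Option α → Option α := fun o => o.bind F

lemma iter_exists_terminal (F : α → Option α)
    (Finj : ∀ a b c, F a = some c → F b = some c → a = b)
    (Inv : α → Prop) (s : α) (hs : ∀ a, F a ≠ some s) (hInv : Inv s)
    (hstep : ∀ a b, Inv a → F a = some b → Inv b) :
    ∃ (k : ℕ) (p : α), (gstep F)^[k] (some s) = some p ∧ Inv p ∧ F p = none := by
  by_contra hcon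
  push_neg at hcon
  have hInvAll : ∀ k p, (gstep F)^[k] (some s) = some p → Inv p := by
    intro k
    induction k with
    | zero =>
      intro p hp
      have : s = p := Option.some.inj hp
      exact this ▸ hInv
    | succ k ih =>
      intro p hp
      rw [Function.iterate_succ_apply'] at hp
      rcases hq : (gstep F)^[k] (some s) with _ | q
      · rw [hq] at hp; simp [gstep] at hp
      · rw [hq] at hp
        exact hstep q p (ih q hq) hp
  have hsome : ∀ k, ∃ p, (gstep F)^[k] (some s) = some p := by
    intro k
    induction k with
    | zero => exact ⟨s, rfl⟩
    | succ k ih =>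
      rcases ih with ⟨p, hp⟩
      have hinvp := hInvAll k p hp
      rcases hF : F p with _ | q
      · exact absurd hF (hcon k p hp hinvp)
      · exact ⟨q, by rw [Function.iterate_succ_apply', hp]; simpa [gstep] using hF⟩
  have hne : ∀ a b, a < b → (gstep F)^[a] (some s) ≠ (gstep F)^[b] (some s) := by
    intro a
    induction a with
    | zero =>
      intro b hb heq
      obtain ⟨b', rfl⟩ : ∃ b', b = b' + 1 := ⟨b - 1, by omega⟩
      rcases hsome b' with ⟨p, hp⟩
      have : F p = some s := by
        rw [Function.iterate_succ_apply', hp] at heq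
        simpa [gstep] using heq.symm
      exact hs p this
    | succ a ih =>
      intro b hb heq
      obtain ⟨b', rfl⟩ : ∃ b', b = b' + 1 := ⟨b - 1, by omega⟩
      rcases hsome a with ⟨pa, hpa⟩
      rcases hsome b' with ⟨pb, hpb⟩
      rcases hsome (a + 1) with ⟨pc, hpc⟩
      have h1 : F pa = some pc := by
        rw [Function.iterate_succ_apply', hpa] at hpc
        simpa [gstep] using hpc
      have h2 : F pb = some pc := by
        have heq2 : (gstep F)^[b' + 1] (some s) = some pc := by
          rw [← heq, Function.iterate_succ_apply', hpa]
          simpa [gstep] using h1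
        rw [Function.iterate_succ_apply', hpb] at heq2
        simpa [gstep] using heq2
      have hpab : pa = pb := Finj _ _ _ h1 h2
      exact ih b' (by omega) (by rw [hpa, hpb, hpab])
  have hfinj : Function.Injective (fun k => (hsome k).choose) := by
    intro a b hab
    by_contra hne'
    rcases Nat.lt_or_ge a b with h | h
    · exact hne a b h (by
        rw [(hsome a).choose_spec, (hsome b).choose_spec]
        simpa using congrArg some hab)
    · have hba : b < a := by omega
      exact hne b a hba (by
        rw [(hsome a).choose_spec, (hsome b).choose_spec]
        simpa using congrArg some hab.symm)
  obtain ⟨a, b, hab, heq⟩ := Finite.exists_ne_map_eq_of_infinite (fun k => (hsome k).choose)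
  exact hab (hfinj heq)

lemma iter_orbit_eq (F : α → Option α)
    (Finj : ∀ a b c, F a = some c → F b = some c → a = b)
    (s s' : α) (hs : ∀ a, F a ≠ some s) (hs' : ∀ a, F a ≠ some s') :
    ∀ (k k' : ℕ) (p : α), (gstep F)^[k] (some s) = some p →
      (gstep F)^[k'] (some s') = some p → s = s' := by
  intro k
  induction k with
  | zero =>
    intro k' p h1 h2
    obtain rfl : s = p := Option.some.inj h1
    rcases k' with _ | k''
    · exact (Option.some.inj h2).symm
    · rw [Function.iterate_succ_apply'] at h2
      rcases hq : (gstep F)^[k''] (some s') with _ | q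
      · rw [hq] at h2; simp [gstep] at h2
      · rw [hq] at h2
        exact absurd (by simpa [gstep] using h2) (hs q)
  | succ k ih =>
    intro k' p h1 h2
    rw [Function.iterate_succ_apply'] at h1
    rcases hq : (gstep F)^[k] (some s) with _ | q
    · rw [hq] at h1; simp [gstep] at h1
    · rw [hq] at h1
      replace h1 : F q = some p := by simpa [gstep] using h1
      rcases k' with _ | k''
      · obtain rfl : s' = p := Option.some.inj h2
        exact absurd h1 (hs' q)
      · rw [Function.iterate_succ_apply'] at h2
        rcases hq' : (gstep F)^[k''] (some s') with _ | q'
        · rw [hq'] at h2; simp [gstep] at h2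
        · rw [hq'] at h2
          replace h2 : F q' = some p := by simpa [gstep] using h2
          have hqq : q = q' := Finj _ _ _ h1 h2
          exact ih k'' q hq (by rw [hqq]; exact hq')

end Iter

namespace Market

variable {n m : ℕ} (M : Market n m)

lemma mem_assigned {μ : Fin n → Option (Fin m)} {j : Fin m} {i : Fin n} :
    i ∈ M.assigned μ j ↔ μ i = some j := by
  simp [assigned]

/-- Index of student `i` within `μ⁻¹(j)` (number of strictly better students). -/
def pidx (μ : Fin n → Option (Fin m)) (j : Fin m) (i : Fin n) : ℕ :=
  ((M.assigned μ j).filter fun i' => M.cRank j (some i') < M.cRank j (some i)).card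

lemma pidx_lt_card {μ : Fin n → Option (Fin m)} {j : Fin m} {i : Fin n} (h : μ i = some j) :
    M.pidx μ j i < (M.assigned μ j).card := by
  apply Finset.card_lt_card
  rw [Finset.ssubset_iff_of_subset (Finset.filter_subset _ _)]
  exact ⟨i, M.mem_assigned.2 h, by simp⟩

lemma pidx_lt_of_cRank_lt {μ : Fin n → Option (Fin m)} {j : Fin m} {a b : Fin n}
    (ha : μ a = some j) (hb : μ b = some j)
    (h : M.cRank j (some a) < M.cRank j (some b)) : M.pidx μ j a < M.pidx μ j b := by
  apply Finset.card_lt_card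
  rw [Finset.ssubset_iff_of_subset]
  · refine ⟨a, ?_, by simp⟩
    simp only [Finset.mem_filter]
    exact ⟨M.mem_assigned.2 ha, h⟩
  · intro x hx
    simp only [Finset.mem_filter] at hx ⊢
    exact ⟨hx.1, hx.2.trans h⟩

lemma pidx_injOn {μ : Fin n → Option (Fin m)} {j : Fin m} {a b : Fin n}
    (ha : μ a = some j) (hb : μ b = some j)
    (h : M.pidx μ j a = M.pidx μ j b) : a = b := by
  by_contra hne
  have hrne : M.cRank j (some a) ≠ M.cRank j (some b) := fun e =>
    hne (Option.some.inj (M.cRank_inj j e))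
  rcases lt_or_gt_of_ne hrne with h' | h'
  · exact absurd (M.pidx_lt_of_cRank_lt ha hb h') (by omega)
  · exact absurd (M.pidx_lt_of_cRank_lt hb ha h') (by omega)

lemma exists_pidx {μ : Fin n → Option (Fin m)} {j : Fin m} {t : ℕ}
    (ht : t < (M.assigned μ j).card) :
    ∃ i, μ i = some j ∧ M.pidx μ j i = t := by
  have hinj : Set.InjOn (M.pidx μ j) (M.assigned μ j) := fun a ha b hb h =>
    M.pidx_injOn (M.mem_assigned.1 ha) (M.mem_assigned.1 hb) h
  have hcard : ((M.assigned μ j).image (M.pidx μ j)).card = (M.assigned μ j).card :=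
    Finset.card_image_of_injOn hinj
  have hsub : (M.assigned μ j).image (M.pidx μ j) ⊆ Finset.Iio (M.assigned μ j).card := by
    intro t' ht'
    rcases Finset.mem_image.1 ht' with ⟨i, hi, rfl⟩
    exact Finset.mem_Iio.2 (M.pidx_lt_card (M.mem_assigned.1 hi))
  have himg : (M.assigned μ j).image (M.pidx μ j) = Finset.Iio (M.assigned μ j).card :=
    Finset.eq_of_subset_of_card_le hsub (by rw [hcard]; simp)
  have : t ∈ (M.assigned μ j).image (M.pidx μ j) := by
    rw [himg]; exact Finset.mem_Iio.2 ht
  rcases Finset.mem_image.1 this with ⟨i, hi, h⟩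
  exact ⟨i, M.mem_assigned.1 hi, h⟩

lemma position_ext {p q : M.Position} (h1 : p.1 = q.1) (h2 : (p.2 : ℕ) = (q.2 : ℕ)) :
    p = q := by
  obtain ⟨j, s⟩ := p
  obtain ⟨j', s'⟩ := q
  cases h1
  exact congrArg (Sigma.mk j) (Fin.val_injective h2)

/-- The position of student `i` under matching `μ` (canonical correspondence). -/
def toPos (μ : Fin n → Option (Fin m)) (i : Fin n) : Option M.Position :=
  if h : ∃ p : M.Position, μ i = some p.1 ∧ (p.2 : ℕ) = M.pidx μ p.1 i then some h.choose
  else none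

/-- The occupant of position `p` under matching `μ` (canonical correspondence). -/
def occ (μ : Fin n → Option (Fin m)) (p : M.Position) : Option (Fin n) :=
  if h : ∃ i, μ i = some p.1 ∧ M.pidx μ p.1 i = (p.2 : ℕ) then some h.choose else none

lemma occ_eq_some_iff {μ : Fin n → Option (Fin m)} {p : M.Position} {i : Fin n} :
    M.occ μ p = some i ↔ μ i = some p.1 ∧ M.pidx μ p.1 i = (p.2 : ℕ) := by
  constructor
  · intro h
    unfold occ at h
    split at h
    · next hex =>
      obtain rfl : hex.choose = i := Option.some.inj h
      exact hex.choose_spec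
    · exact absurd h (by simp)
  · intro ⟨h1, h2⟩
    have hex : ∃ i', μ i' = some p.1 ∧ M.pidx μ p.1 i' = (p.2 : ℕ) := ⟨i, h1, h2⟩
    unfold occ
    rw [dif_pos hex]
    have hspec := hex.choose_spec
    exact congrArg some (M.pidx_injOn hspec.1 h1 (by rw [hspec.2, h2]))

lemma occ_eq_none_iff {μ : Fin n → Option (Fin m)} {p : M.Position} :
    M.occ μ p = none ↔ (M.assigned μ p.1).card ≤ (p.2 : ℕ) := by
  constructor
  · intro h
    by_contra hlt
    push_neg at hlt
    obtain ⟨i, hi, hpi⟩ := M.exists_pidx hlt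
    have : M.occ μ p = some i := M.occ_eq_some_iff.2 ⟨hi, hpi⟩
    rw [h] at this
    cases this
  · intro h
    unfold occ
    rw [dif_neg]
    rintro ⟨i, hi, hpi⟩
    have := M.pidx_lt_card hi
    omega

lemma toPos_eq_some_iff {μ : Fin n → Option (Fin m)} {i : Fin n} {p : M.Position} :
    M.toPos μ i = some p ↔ μ i = some p.1 ∧ (p.2 : ℕ) = M.pidx μ p.1 i := by
  constructor
  · intro h
    unfold toPos at h
    split at h
    · next hex =>
      obtain rfl : hex.choose = p := Option.some.inj h
      exact hex.choose_spec
    · exact absurd h (by simp)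
  · intro ⟨h1, h2⟩
    have hex : ∃ q : M.Position, μ i = some q.1 ∧ (q.2 : ℕ) = M.pidx μ q.1 i := ⟨p, h1, h2⟩
    unfold toPos
    rw [dif_pos hex]
    have hspec := hex.choose_spec
    refine congrArg some (M.position_ext ?_ ?_)
    · exact Option.some.inj (hspec.1.symm.trans h1)
    · have hfst : hex.choose.1 = p.1 := Option.some.inj (hspec.1.symm.trans h1)
      rw [hspec.2, h2, hfst]

lemma toPos_eq_none_iff {μ : Fin n → Option (Fin m)} (hμ : M.IsMatching μ) {i : Fin n} :
    M.toPos μ i = none ↔ μ i = none := by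
  constructor
  · intro h
    rcases hmi : μ i with _ | j
    · rfl
    · exfalso
      have hlt : M.pidx μ j i < M.quota j := lt_of_lt_of_le (M.pidx_lt_card hmi) (hμ j)
      have : M.toPos μ i = some ⟨j, ⟨M.pidx μ j i, hlt⟩⟩ :=
        M.toPos_eq_some_iff.2 ⟨hmi, rfl⟩
      rw [h] at this
      cases this
  · intro h
    unfold toPos
    rw [dif_neg]
    rintro ⟨q, hq, -⟩
    rw [h] at hq
    cases hq

lemma toPos_iff_occ {μ : Fin n → Option (Fin m)} {i : Fin n} {p : M.Position} :
    M.toPos μ i = some p ↔ M.occ μ p = some i := by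
  rw [toPos_eq_some_iff, occ_eq_some_iff]
  tauto

lemma sRank_lt_none {μ : Fin n → Option (Fin m)} (hIR : M.IndRational μ) {i : Fin n}
    {j : Fin m} (h : μ i = some j) : M.sRank i (some j) < M.sRank i none := by
  have h1 := hIR.1 i
  rw [h] at h1
  have h2 : M.sRank i none ≠ M.sRank i (some j) := fun e => by
    cases M.sRank_inj i e
  simp only [sPref] at h1
  omega

lemma cRank_lt_none {μ : Fin n → Option (Fin m)} (hIR : M.IndRational μ) {i : Fin n}
    {j : Fin m} (h : μ i = some j) : M.cRank j (some i) < M.cRank j none := by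
  have h1 := hIR.2 j i h
  have h2 : M.cRank j none ≠ M.cRank j (some i) := fun e => by
    cases M.cRank_inj j e
  simp only [cPref] at h1
  omega

lemma posBetter_or (i : Fin n) {p q : M.Position} (hne : p ≠ q) :
    M.PosBetter i (some p) (some q) ∨ M.PosBetter i (some q) (some p) := by
  obtain ⟨j, s⟩ := p
  obtain ⟨j', s'⟩ := q
  by_cases hj : j = j'
  · subst hj
    have hs : (s : ℕ) ≠ (s' : ℕ) := fun h =>
      hne (congrArg (Sigma.mk j) (Fin.val_injective h))
    rcases Nat.lt_or_ge (s : ℕ) (s' : ℕ) with h | h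
    · exact Or.inl (Or.inr ⟨rfl, h⟩)
    · exact Or.inr (Or.inr ⟨rfl, show (s' : ℕ) < (s : ℕ) by omega⟩)
  · have hr : M.sRank i (some j) ≠ M.sRank i (some j') := fun h =>
      hj (Option.some.inj (M.sRank_inj i h))
    rcases lt_or_gt_of_ne hr with h | h
    · exact Or.inl (Or.inl h)
    · exact Or.inr (Or.inl h)

/-- A blocking pair in the related one-to-one market yields a blocking pair
of the original many-to-one matching. -/
lemma posblock_blocks {μ : Fin n → Option (Fin m)} (hμ : M.IsMatching μ)
    (hIR : M.IndRational μ) {i : Fin n} {p : M.Position}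
    (h1 : M.PosBetter i (some p) (M.toPos μ i)) (h2 : M.cPref p.1 (some i) (M.occ μ p)) :
    M.Blocks μ i p.1 := by
  obtain ⟨j, s⟩ := p
  have hsp : M.sPref i (some j) (μ i) := by
    rcases hti : M.toPos μ i with _ | q
    · rw [hti] at h1
      have hmi : μ i = none := (M.toPos_eq_none_iff hμ).1 hti
      rw [hmi]
      exact h1
    · rw [hti] at h1
      obtain ⟨j₂, s₂⟩ := q
      obtain ⟨hmi, hs₂⟩ := M.toPos_eq_some_iff.1 hti
      replace hmi : μ i = some j₂ := hmi
      replace hs₂ : (s₂ : ℕ) = M.pidx μ j₂ i := hs₂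
      rcases h1 with h1 | ⟨hjj, hlt⟩
      · rw [hmi]; exact h1
      · exfalso
        cases hjj
        replace hlt : (s : ℕ) < (s₂ : ℕ) := hlt
        have hcard : (s : ℕ) < (M.assigned μ j).card := by
          have := M.pidx_lt_card hmi
          omega
        rcases hocc : M.occ μ ⟨j, s⟩ with _ | i'
        · have hno : (M.assigned μ j).card ≤ (s : ℕ) := M.occ_eq_none_iff.1 hocc
          omega
        · obtain ⟨hmi', hpi'⟩ := M.occ_eq_some_iff.1 hocc
          replace hmi' : μ i' = some j := hmi'
          replace hpi' : M.pidx μ j i' = (s : ℕ) := hpi'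
          rw [hocc] at h2
          have := M.pidx_lt_of_cRank_lt hmi hmi' h2
          omega
  rcases hocc : M.occ μ ⟨j, s⟩ with _ | i'
  · rw [hocc] at h2
    have hvac : (M.assigned μ j).card < M.quota j := by
      have hc : (M.assigned μ j).card ≤ (s : ℕ) := M.occ_eq_none_iff.1 hocc
      have := s.isLt
      omega
    exact ⟨hsp, Or.inl ⟨hvac, h2⟩⟩
  · rw [hocc] at h2
    obtain ⟨hmi', -⟩ := M.occ_eq_some_iff.1 hocc
    replace hmi' : μ i' = some j := hmi'
    rcases lt_or_eq_of_le (hμ j) with hlt | heq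
    · have hacc : M.cPref j (some i) none := lt_trans h2 (M.cRank_lt_none hIR hmi')
      exact ⟨hsp, Or.inl ⟨hlt, hacc⟩⟩
    · exact ⟨hsp, Or.inr ⟨heq, i', M.mem_assigned.2 hmi', h2⟩⟩


section Chains

variable {μ μ' : Fin n → Option (Fin m)}

/-- Every position filled under the 1-envy-free matching `μ'` is filled under
the stable matching `μ`. -/
lemma occ_ne_none_of (hμ : M.IsMatching μ) (hμ' : M.IsMatching μ')
    (hst : M.Stable μ) (h1 : M.OneEnvyFree μ') :
    ∀ p : M.Position, M.occ μ' p ≠ none → M.occ μ p ≠ none := by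
  intro p₀ hne h0
  rcases hi₀ : M.occ μ' p₀ with _ | i₀
  · exact hne hi₀
  set G : M.Position → Option M.Position := fun p => (M.occ μ' p).bind (M.toPos μ) with hG
  have Ginj : ∀ a b c, G a = some c → G b = some c → a = b := by
    intro a b c ha hb
    rcases Option.bind_eq_some_iff.1 ha with ⟨ia, ha1, ha2⟩
    rcases Option.bind_eq_some_iff.1 hb with ⟨ib, hb1, hb2⟩
    have hia : M.occ μ c = some ia := M.toPos_iff_occ.1 ha2
    have hib : M.occ μ c = some ib := M.toPos_iff_occ.1 hb2
    obtain rfl : ia = ib := Option.some.inj (hia.symm.trans hib)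
    have ha' : M.toPos μ' ia = some a := M.toPos_iff_occ.2 ha1
    have hb' : M.toPos μ' ia = some b := M.toPos_iff_occ.2 hb1
    exact Option.some.inj (ha'.symm.trans hb')
  have hsrc : ∀ a, G a ≠ some p₀ := by
    intro a ha
    rcases Option.bind_eq_some_iff.1 ha with ⟨i, -, h2'⟩
    have : M.occ μ p₀ = some i := M.toPos_iff_occ.1 h2'
    rw [h0] at this
    cases this
  set Inv : M.Position → Prop :=
    fun p => ∃ i, M.occ μ' p = some i ∧ M.cPref p.1 (some i) (M.occ μ p) with hInvDef
  have hInv₀ : Inv p₀ := by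
    refine ⟨i₀, hi₀, ?_⟩
    rw [h0]
    have hmi : μ' i₀ = some p₀.1 := (M.occ_eq_some_iff.1 hi₀).1
    exact M.cRank_lt_none h1.1.1 hmi
  have hstep : ∀ a b, Inv a → G a = some b → Inv b := by
    rintro a b ⟨i', hia', hQ'⟩ hab
    rcases Option.bind_eq_some_iff.1 hab with ⟨i, hia, h2'⟩
    have hii : i' = i := Option.some.inj (hia'.symm.trans hia)
    rw [hii] at hQ'
    have hQ := hQ'
    -- h2' : M.toPos μ i = some b
    have hba : b ≠ a := by
      rintro rfl
      have : M.occ μ b = some i := M.toPos_iff_occ.1 h2'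
      rw [this] at hQ
      exact lt_irrefl _ hQ
    have hnb : ¬ M.PosBetter i (some a) (some b) := by
      intro hpb
      have hblk : M.Blocks μ i a.1 := by
        refine M.posblock_blocks hμ hst.1 ?_ hQ
        rw [h2']
        exact hpb
      exact hst.2 i a.1 hblk
    have hba' : M.PosBetter i (some b) (some a) := (M.posBetter_or i hba).resolve_right hnb
    have hta : M.toPos μ' i = some a := M.toPos_iff_occ.2 hia
    have hnc : ¬ M.cPref b.1 (some i) (M.occ μ' b) := by
      intro hc
      have hblk : M.Blocks μ' i b.1 := by
        refine M.posblock_blocks hμ' h1.1.1 ?_ hc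
        rw [hta]
        exact hba'
      have : μ' i = none := h1.1.2 i b.1 hblk
      rw [(M.occ_eq_some_iff.1 hia).1] at this
      cases this
    have hocb : M.occ μ b = some i := M.toPos_iff_occ.1 h2'
    rcases hocb' : M.occ μ' b with _ | i₂
    · exfalso
      apply hnc
      rw [hocb']
      exact M.cRank_lt_none hst.1 (M.occ_eq_some_iff.1 hocb).1
    · have hne₂ : i₂ ≠ i := by
        rintro rfl
        have : M.toPos μ' i₂ = some b := M.toPos_iff_occ.2 hocb'
        rw [hta] at this
        exact hba (Option.some.inj this).symm
      have hrne : M.cRank b.1 (some i) ≠ M.cRank b.1 (some i₂) := fun e =>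
        hne₂ (Option.some.inj (M.cRank_inj b.1 e)).symm
      have hlt : M.cRank b.1 (some i₂) < M.cRank b.1 (some i) := by
        rw [hocb'] at hnc
        simp only [cPref] at hnc
        omega
      exact ⟨i₂, hocb', by rw [hocb]; exact hlt⟩
  obtain ⟨k, p, -, ⟨i, hocc', hQ⟩, hGp⟩ :=
    iter_exists_terminal G Ginj Inv p₀ hsrc hInv₀ hstep
  rw [hG] at hGp
  simp only [hocc', Option.bind_some] at hGp
  have hmin : μ i = none := (M.toPos_eq_none_iff hμ).1 hGp
  have hblk : M.Blocks μ i p.1 := by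
    refine M.posblock_blocks hμ hst.1 ?_ hQ
    rw [hGp]
    exact M.sRank_lt_none h1.1.1 (M.occ_eq_some_iff.1 hocc').1
  exact hst.2 i p.1 hblk

/-- At most one position is filled under `μ` but unfilled under `μ'`. -/
lemma occ_extra_subsingleton (hμ : M.IsMatching μ) (hμ' : M.IsMatching μ')
    (hst : M.Stable μ) (h1 : M.OneEnvyFree μ') :
    ∀ p q : M.Position, M.occ μ p ≠ none → M.occ μ' p = none →
      M.occ μ q ≠ none → M.occ μ' q = none → p = q := by
  set F : M.Position → Option M.Position := fun p => (M.occ μ p).bind (M.toPos μ') with hF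
  have Finj : ∀ a b c, F a = some c → F b = some c → a = b := by
    intro a b c ha hb
    rcases Option.bind_eq_some_iff.1 ha with ⟨ia, ha1, ha2⟩
    rcases Option.bind_eq_some_iff.1 hb with ⟨ib, hb1, hb2⟩
    have hia : M.occ μ' c = some ia := M.toPos_iff_occ.1 ha2
    have hib : M.occ μ' c = some ib := M.toPos_iff_occ.1 hb2
    obtain rfl : ia = ib := Option.some.inj (hia.symm.trans hib)
    have ha' : M.toPos μ ia = some a := M.toPos_iff_occ.2 ha1
    have hb' : M.toPos μ ia = some b := M.toPos_iff_occ.2 hb1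
    exact Option.some.inj (ha'.symm.trans hb')
  set Inv : M.Position → Prop :=
    fun p => ∃ i, M.occ μ p = some i ∧ M.cPref p.1 (some i) (M.occ μ' p) with hInvDef
  have hstep : ∀ a b, Inv a → F a = some b → Inv b := by
    rintro a b ⟨i', hia', hQ'⟩ hab
    rcases Option.bind_eq_some_iff.1 hab with ⟨i, hia, h2'⟩
    have hii : i' = i := Option.some.inj (hia'.symm.trans hia)
    rw [hii] at hQ'
    have hQ := hQ'
    -- h2' : M.toPos μ' i = some b
    have hba : b ≠ a := by
      rintro rfl
      have : M.occ μ' b = some i := M.toPos_iff_occ.1 h2'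
      rw [this] at hQ
      exact lt_irrefl _ hQ
    have hnb : ¬ M.PosBetter i (some a) (some b) := by
      intro hpb
      have hblk : M.Blocks μ' i a.1 := by
        refine M.posblock_blocks hμ' h1.1.1 ?_ hQ
        rw [h2']
        exact hpb
      have : μ' i = none := h1.1.2 i a.1 hblk
      rw [(M.occ_eq_some_iff.1 (M.toPos_iff_occ.1 h2')).1] at this
      cases this
    have hba' : M.PosBetter i (some b) (some a) := (M.posBetter_or i hba).resolve_right hnb
    have hta : M.toPos μ i = some a := M.toPos_iff_occ.2 hia
    have hnc : ¬ M.cPref b.1 (some i) (M.occ μ b) := by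
      intro hc
      have hblk : M.Blocks μ i b.1 := by
        refine M.posblock_blocks hμ hst.1 ?_ hc
        rw [hta]
        exact hba'
      exact hst.2 i b.1 hblk
    have hocb : M.occ μ' b = some i := M.toPos_iff_occ.1 h2'
    rcases hocb' : M.occ μ b with _ | i₂
    · exfalso
      apply hnc
      rw [hocb']
      exact M.cRank_lt_none h1.1.1 (M.occ_eq_some_iff.1 hocb).1
    · have hne₂ : i₂ ≠ i := by
        rintro rfl
        have : M.toPos μ i₂ = some b := M.toPos_iff_occ.2 hocb'
        rw [hta] at this
        exact hba (Option.some.inj this).symm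
      have hrne : M.cRank b.1 (some i) ≠ M.cRank b.1 (some i₂) := fun e =>
        hne₂ (Option.some.inj (M.cRank_inj b.1 e)).symm
      have hlt : M.cRank b.1 (some i₂) < M.cRank b.1 (some i) := by
        rw [hocb'] at hnc
        simp only [cPref] at hnc
        omega
      exact ⟨i₂, hocb', by rw [hocb]; exact hlt⟩
  have hrun : ∀ p : M.Position, M.occ μ p ≠ none → M.occ μ' p = none →
      ∃ (k : ℕ) (pe : M.Position) (i : Fin n), (gstep F)^[k] (some p) = some pe ∧
        M.occ μ pe = some i ∧ M.Blocks μ' i pe.1 ∧ μ' i = none ∧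
        (∀ a, F a ≠ some p) := by
    intro p hp hp'
    rcases hip : M.occ μ p with _ | ip
    · exact absurd hip hp
    have hsrc : ∀ a, F a ≠ some p := by
      intro a ha
      rcases Option.bind_eq_some_iff.1 ha with ⟨i, -, h2'⟩
      have : M.occ μ' p = some i := M.toPos_iff_occ.1 h2'
      rw [hp'] at this
      cases this
    have hInv₀ : Inv p := by
      refine ⟨ip, hip, ?_⟩
      rw [hp']
      exact M.cRank_lt_none hst.1 (M.occ_eq_some_iff.1 hip).1
    obtain ⟨k, pe, horb, ⟨i, hocc, hQ⟩, hFpe⟩ :=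
      iter_exists_terminal F Finj Inv p hsrc hInv₀ hstep
    rw [hF] at hFpe
    simp only [hocc, Option.bind_some] at hFpe
    have hmin : μ' i = none := (M.toPos_eq_none_iff hμ').1 hFpe
    have hblk : M.Blocks μ' i pe.1 := by
      refine M.posblock_blocks hμ' h1.1.1 ?_ hQ
      rw [hFpe]
      exact M.sRank_lt_none hst.1 (M.occ_eq_some_iff.1 hocc).1
    exact ⟨k, pe, i, horb, hocc, hblk, hmin, hsrc⟩
  intro p q hp hp' hq hq'
  obtain ⟨k, pe, i, horb, hocc, hblk, hmin, hsrcp⟩ := hrun p hp hp'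
  obtain ⟨k', qe, i', horb', hocc', hblk', hmin', hsrcq⟩ := hrun q hq hq'
  rcases h1.2 with hstbl | ⟨istar, hstar, -⟩
  · exact absurd hblk (hstbl.2 i pe.1)
  · have hii : i = i' := by
      rw [hstar i pe.1 hblk, hstar i' qe.1 hblk']
    have hpe : M.toPos μ i = some pe := M.toPos_iff_occ.2 hocc
    have hqe : M.toPos μ i = some qe := by
      rw [hii]; exact M.toPos_iff_occ.2 hocc'
    obtain rfl : pe = qe := Option.some.inj (hpe.symm.trans hqe)
    exact iter_orbit_eq F Finj p q hsrcp hsrcq k k' pe horb horb'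

lemma card_assigned_le (hμ : M.IsMatching μ) (hμ' : M.IsMatching μ')
    (hst : M.Stable μ) (h1 : M.OneEnvyFree μ') (j : Fin m) :
    (M.assigned μ' j).card ≤ (M.assigned μ j).card := by
  by_contra hlt
  push_neg at hlt
  have hq : (M.assigned μ' j).card ≤ M.quota j := hμ' j
  have hsq : (M.assigned μ j).card < M.quota j := by omega
  set s : Fin (M.quota j) := ⟨(M.assigned μ j).card, hsq⟩ with hsdef
  have h2' : M.occ μ ⟨j, s⟩ = none := M.occ_eq_none_iff.2 (le_refl _)
  have h1' : M.occ μ' ⟨j, s⟩ ≠ none := by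
    rw [Ne, M.occ_eq_none_iff]
    show ¬ (M.assigned μ' j).card ≤ (M.assigned μ j).card
    omega
  exact M.occ_ne_none_of hμ hμ' hst h1 ⟨j, s⟩ h1' h2'

end Chains

end Market

end AuxDev

/-- comparing a stable matching `μ` with a 1-envy-free matching
`μ'`, exactly one of the two cases holds: every college fills the same number
of positions, or exactly one college `j*` fills one extra position under `μ`
and all others fill the same number. -/
theorem stable_vs_oneEnvyFree_taxonomy {n m : ℕ} (M : Market n m)
    (μ μ' : Fin n → Option (Fin m))
    (hμ : M.IsMatching μ) (hst : M.Stable μ)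
    (hμ' : M.IsMatching μ') (h1 : M.OneEnvyFree μ') :
    Xor'
      (∀ j, (M.assigned μ j).card = (M.assigned μ' j).card)
      (∃ jstar : Fin m,
        (M.assigned μ jstar).card = (M.assigned μ' jstar).card + 1 ∧
        ∀ j, j ≠ jstar → (M.assigned μ j).card = (M.assigned μ' j).card) := by
  classical
  have hle : ∀ j, (M.assigned μ' j).card ≤ (M.assigned μ j).card := fun j => M.card_assigned_le hμ hμ' hst h1 j
  have hcard1 : (Finset.univ.filter fun p : M.Position =>
      M.occ μ p ≠ none ∧ M.occ μ' p = none).card ≤ 1 := by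
    rw [Finset.card_le_one]
    intro a ha b hb
    simp only [Finset.mem_filter, Finset.mem_univ, true_and] at ha hb
    exact M.occ_extra_subsingleton hμ hμ' hst h1 a b ha.1 ha.2 hb.1 hb.2
  have hsig : (Finset.univ.filter fun p : M.Position =>
      M.occ μ p ≠ none ∧ M.occ μ' p = none)
      = Finset.univ.sigma fun j => Finset.univ.filter fun s : Fin (M.quota j) =>
          M.occ μ ⟨j, s⟩ ≠ none ∧ M.occ μ' ⟨j, s⟩ = none := by
    ext ⟨j, s⟩
    simp [Finset.mem_sigma]
  have hcount : ∀ j, (Finset.univ.filter fun s : Fin (M.quota j) =>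
      M.occ μ ⟨j, s⟩ ≠ none ∧ M.occ μ' ⟨j, s⟩ = none).card = (M.assigned μ j).card - (M.assigned μ' j).card := by
    intro j
    have hcond : ∀ s : Fin (M.quota j),
        (M.occ μ ⟨j, s⟩ ≠ none ∧ M.occ μ' ⟨j, s⟩ = none)
        ↔ ((M.assigned μ' j).card ≤ (s : ℕ) ∧ (s : ℕ) < (M.assigned μ j).card) := by
      intro s
      constructor
      · rintro ⟨ha, hb⟩
        have hb' : (M.assigned μ' j).card ≤ (s : ℕ) := M.occ_eq_none_iff.1 hb
        refine ⟨hb', ?_⟩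
        by_contra h3
        exact ha (M.occ_eq_none_iff.2 (show (M.assigned μ j).card ≤ (s : ℕ) by omega))
      · rintro ⟨ha, hb⟩
        refine ⟨fun hn => ?_, M.occ_eq_none_iff.2 ha⟩
        have := M.occ_eq_none_iff.1 hn
        have : (M.assigned μ j).card ≤ (s : ℕ) := this
        omega
    rw [Finset.filter_congr fun s _ => hcond s]
    have hinj : Function.Injective (Fin.val : Fin (M.quota j) → ℕ) := Fin.val_injective
    rw [← Finset.card_image_of_injective _ hinj]
    have himg : ((Finset.univ.filter fun s : Fin (M.quota j) =>
        (M.assigned μ' j).card ≤ (s : ℕ) ∧ (s : ℕ) < (M.assigned μ j).card).image Fin.val) = Finset.Ico ((M.assigned μ' j).card) ((M.assigned μ j).card) := by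
      ext t
      simp only [Finset.mem_image, Finset.mem_filter, Finset.mem_univ, true_and,
        Finset.mem_Ico]
      constructor
      · rintro ⟨s, hs, rfl⟩
        exact hs
      · rintro ⟨ha, hb⟩
        have ht : t < M.quota j := lt_of_lt_of_le hb (hμ j)
        exact ⟨⟨t, ht⟩, ⟨ha, hb⟩, rfl⟩
    rw [himg, Nat.card_Ico]
  have hsum : ∑ j, ((M.assigned μ j).card - (M.assigned μ' j).card) ≤ 1 := by
    have h := hcard1
    rw [hsig, Finset.card_sigma] at h
    calc ∑ j, ((M.assigned μ j).card - (M.assigned μ' j).card)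
        = ∑ j, (Finset.univ.filter fun s : Fin (M.quota j) =>
            M.occ μ ⟨j, s⟩ ≠ none ∧ M.occ μ' ⟨j, s⟩ = none).card :=
          Finset.sum_congr rfl fun j _ => (hcount j).symm
      _ ≤ 1 := h
  rcases Nat.le_one_iff_eq_zero_or_eq_one.1 hsum with h0 | hone
  · left
    have hall : ∀ j, (M.assigned μ j).card = (M.assigned μ' j).card := by
      intro j
      have h := Finset.sum_eq_zero_iff.1 h0 j (Finset.mem_univ j)
      have := hle j
      omega
    refine ⟨hall, ?_⟩
    rintro ⟨jstar, hjs, -⟩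
    have := hall jstar
    omega
  · right
    have hex : ∃ j₀, (M.assigned μ j₀).card - (M.assigned μ' j₀).card ≠ 0 := by
      by_contra hno
      push_neg at hno
      rw [Finset.sum_eq_zero fun j _ => hno j] at hone
      exact absurd hone.symm one_ne_zero
    obtain ⟨j₀, hj₀⟩ := hex
    have hsplit : ((M.assigned μ j₀).card - (M.assigned μ' j₀).card)
        + ∑ j ∈ Finset.univ.erase j₀, ((M.assigned μ j).card - (M.assigned μ' j).card)
        = ∑ j, ((M.assigned μ j).card - (M.assigned μ' j).card) :=
      Finset.add_sum_erase Finset.univ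
        (fun j => (M.assigned μ j).card - (M.assigned μ' j).card) (Finset.mem_univ j₀)
    have hrest : ∑ j ∈ Finset.univ.erase j₀, ((M.assigned μ j).card - (M.assigned μ' j).card) = 0 := by omega
    have hterm : (M.assigned μ j₀).card - (M.assigned μ' j₀).card = 1 := by omega
    constructor
    · refine ⟨j₀, ?_, ?_⟩
      · have := hle j₀
        omega
      · intro j hj
        have h := Finset.sum_eq_zero_iff.1 hrest j
          (Finset.mem_erase.2 ⟨hj, Finset.mem_univ j⟩)
        have := hle j
        omega
    · intro hall
      have := hall j₀
      have := hle j₀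
      omega
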